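/- Every full-rank lattice L in R^d (d ≥ 2) has a basis x_1,...,x_d all of whose vectors have strictly positive coordinates. -/

import Mathlib

open Matrix

/-- There is an integer vector `z` with `X z` entrywise positive. -/
lemma exists_pos_intvec (d : ℕ) (hd : 0 < d) (X : Matrix (Fin d) (Fin d) ℝ)
    (hX : IsUnit X.det) :
    ∃ z : Fin d → ℤ, ∀ i, 0 < X.mulVec (fun k => ((z k : ℤ) : ℝ)) i := by
  set y : Fin d → ℝ := X⁻¹.mulVec (fun _ => 1) with hy
  have hXy : X.mulVec y = fun _ => 1 := by
    rw [hy, Matrix.mulVec_mulVec, X.mul_nonsing_inv hX, Matrix.one_mulVec]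
  obtain ⟨n, hn⟩ := exists_nat_gt (∑ i, ∑ k, |X i k|)
  refine ⟨fun k => ⌊(n : ℝ) * y k⌋, fun i => ?_⟩
  have key : X.mulVec (fun k => ((⌊(n : ℝ) * y k⌋ : ℤ) : ℝ)) i
      = (n : ℝ) * X.mulVec y i
        + ∑ k, X i k * (((⌊(n : ℝ) * y k⌋ : ℤ) : ℝ) - (n : ℝ) * y k) := by
    simp only [Matrix.mulVec, dotProduct, Finset.mul_sum, mul_sub,
      ← Finset.sum_add_distrib]
    exact Finset.sum_congr rfl fun k _ => by ring
  have hXyi : X.mulVec y i = 1 := by rw [hXy]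
  have herr : |∑ k, X i k * (((⌊(n : ℝ) * y k⌋ : ℤ) : ℝ) - (n : ℝ) * y k)|
      ≤ ∑ k, |X i k| := by
    refine (Finset.abs_sum_le_sum_abs _ _).trans (Finset.sum_le_sum fun k _ => ?_)
    rw [abs_mul]
    have h1 : |((⌊(n : ℝ) * y k⌋ : ℤ) : ℝ) - (n : ℝ) * y k| ≤ 1 := by
      have h2 := Int.sub_one_lt_floor ((n : ℝ) * y k)
      have h3 := Int.floor_le ((n : ℝ) * y k)
      rw [abs_le]
      constructor <;> linarith
    calc |X i k| * |((⌊(n : ℝ) * y k⌋ : ℤ) : ℝ) - (n : ℝ) * y k|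
        ≤ |X i k| * 1 := by gcongr
      _ = |X i k| := mul_one _
  have hsum : ∑ k, |X i k| ≤ ∑ i', ∑ k, |X i' k| :=
    Finset.single_le_sum (f := fun i' => ∑ k, |X i' k|)
      (fun i' _ => Finset.sum_nonneg fun k _ => abs_nonneg _) (Finset.mem_univ i)
  rw [key, hXyi, mul_one]
  have := abs_le.mp herr
  linarith

/-- There is a primitive integer vector `p` with `X p` entrywise positive. -/
lemma exists_primitive_pos (d : ℕ) (hd : 0 < d) (X : Matrix (Fin d) (Fin d) ℝ)
    (hX : IsUnit X.det) :
    ∃ p : Fin d → ℤ, (∀ i, 0 < X.mulVec (fun k => ((p k : ℤ) : ℝ)) i) ∧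
      ∃ c : Fin d → ℤ, ∑ i, c i * p i = 1 := by
  obtain ⟨z, hz⟩ := exists_pos_intvec d hd X hX
  have hz0 : z ≠ 0 := by
    intro h
    have h2 := hz ⟨0, hd⟩
    simp only [h] at h2
    simp [Matrix.mulVec, dotProduct] at h2
  set I : Ideal ℤ := Ideal.span (Set.range z) with hI
  haveI : I.IsPrincipal := IsPrincipalIdealRing.principal I
  set g0 : ℤ := Submodule.IsPrincipal.generator I with hg0
  have hgen : Ideal.span {g0} = I := Ideal.span_singleton_generator I
  have hdvd : ∀ i, g0 ∣ z i := by
    intro i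
    have : z i ∈ I := Ideal.subset_span (Set.mem_range_self i)
    rw [← hgen] at this
    exact Ideal.mem_span_singleton.mp this
  have hg0mem : g0 ∈ I := Submodule.IsPrincipal.generator_mem I
  rw [hI] at hg0mem
  obtain ⟨c, hc⟩ := (Submodule.mem_span_range_iff_exists_fun ℤ).mp hg0mem
  have hg0ne : g0 ≠ 0 := by
    intro h
    apply hz0
    funext i
    have := hdvd i
    rw [h] at this
    exact zero_dvd_iff.mp this
  -- make the generator positive
  obtain ⟨g, c', hgpos, hgdvd, hgc⟩ :
      ∃ (g : ℤ) (c' : Fin d → ℤ), 0 < g ∧ (∀ i, g ∣ z i) ∧ ∑ i, c' i * z i = g := by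
    rcases hg0ne.lt_or_gt with hneg | hpos
    · exact ⟨-g0, fun i => -(c i), by omega, fun i => (neg_dvd.mpr (hdvd i)),
        by simp only [neg_mul, ← Finset.sum_neg_distrib]
           rw [← neg_inj] at hc ⊢
           simpa [smul_eq_mul] using hc⟩
    · exact ⟨g0, c, hpos, hdvd, by simpa [smul_eq_mul] using hc⟩
  refine ⟨fun i => z i / g, fun i => ?_, c', ?_⟩
  · -- positivity
    have hzg : ∀ k, ((z k : ℤ) : ℝ) = (g : ℝ) * ((z k / g : ℤ) : ℝ) := by
      intro k
      rw [← Int.cast_mul, Int.mul_ediv_cancel' (hgdvd k)]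
    have h2 := hz i
    simp only [Matrix.mulVec, dotProduct] at h2 ⊢
    have hrw : ∑ k, X i k * ((z k : ℤ) : ℝ)
        = (g : ℝ) * ∑ k, X i k * ((z k / g : ℤ) : ℝ) := by
      rw [Finset.mul_sum]
      exact Finset.sum_congr rfl fun k _ => by rw [hzg k]; ring
    rw [hrw] at h2
    have hgR : (0 : ℝ) < (g : ℝ) := by exact_mod_cast hgpos
    nlinarith
  · -- Bezout
    have hsum : g * (∑ i, c' i * (z i / g)) = ∑ i, c' i * z i := by
      rw [Finset.mul_sum]
      exact Finset.sum_congr rfl fun i _ => by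
        rw [mul_left_comm, Int.mul_ediv_cancel' (hgdvd i)]
    have : g * (∑ i, c' i * (z i / g)) = g * 1 := by
      rw [mul_one]; exact hsum.trans hgc
    exact mul_left_cancel₀ (by omega) this

/-- A vector with Bezout coefficients summing to 1 extends to a basis of `ℤ^d`. -/
lemma exists_basis_with_vector (d : ℕ) (hd : 0 < d) (p c : Fin d → ℤ)
    (hc : ∑ i, c i * p i = 1) :
    ∃ B : Module.Basis (Fin d) ℤ (Fin d → ℤ), B ⟨0, hd⟩ = p := by
  let f : (Fin d → ℤ) →ₗ[ℤ] ℤ :=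
    { toFun := fun v => ∑ i, c i * v i
      map_add' := by intro u v; simp [mul_add, Finset.sum_add_distrib]
      map_smul' := by intro a v; simp [Finset.mul_sum, mul_left_comm] }
  have hfp : f p = 1 := hc
  obtain ⟨n, bN⟩ := Submodule.basisOfPid (Pi.basisFun ℤ (Fin d)) (LinearMap.ker f)
  have hli : ∀ (a : ℤ), ∀ x ∈ LinearMap.ker f, a • p + x = 0 → a = 0 := by
    intro a x hx h
    have h2 := congrArg f h
    rw [map_add, f.map_smul, LinearMap.mem_ker.mp hx, hfp] at h2
    simpa using h2
  have hsp : ∀ v : Fin d → ℤ, ∃ a : ℤ, v + a • p ∈ LinearMap.ker f := by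
    intro v
    refine ⟨-f v, ?_⟩
    rw [LinearMap.mem_ker, map_add, f.map_smul, hfp]
    simp
  let B0 := Module.Basis.mkFinCons p bN hli hsp
  have hcard : n + 1 = d := by
    have h1 := Module.finrank_eq_card_basis B0
    have h2 := Module.finrank_eq_card_basis (Pi.basisFun ℤ (Fin d))
    simp only [Fintype.card_fin] at h1 h2
    omega
  refine ⟨B0.reindex (finCongr hcard), ?_⟩
  rw [Module.Basis.reindex_apply]
  have h0 : (finCongr hcard).symm ⟨0, hd⟩ = 0 := by
    ext
    simp
  rw [h0]
  show B0 0 = p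
  have := Module.Basis.coe_mkFinCons p bN hli hsp
  calc B0 0 = (Fin.cons p ((↑) ∘ bN) : Fin (n+1) → (Fin d → ℤ)) 0 := by rw [← this]
    _ = p := Fin.cons_zero _ _

/-- Every full-rank lattice `L = X·ℤ^d` in `ℝ^d` (`d ≥ 2`) has a basis all of whose
vectors have strictly positive coordinates: there is a change of basis matrix
`U ∈ GL_d(ℤ)` such that all entries of `X * U` are positive. -/
theorem positive_basis_exists (d : ℕ) (hd : 2 ≤ d)
    (X : Matrix (Fin d) (Fin d) ℝ) (hX : IsUnit X.det) :
    ∃ U : Matrix (Fin d) (Fin d) ℤ, IsUnit U.det ∧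
      ∀ i j, 0 < (X * U.map (Int.cast : ℤ → ℝ)) i j := by
  have hd0 : 0 < d := by omega
  haveI : Nonempty (Fin d) := Fin.pos_iff_nonempty.mp hd0
  set i0 : Fin d := ⟨0, hd0⟩ with hi0
  obtain ⟨p, hp, c, hc⟩ := exists_primitive_pos d hd0 X hX
  obtain ⟨B, hB⟩ := exists_basis_with_vector d hd0 p c hc
  set U0 : Matrix (Fin d) (Fin d) ℤ := (Pi.basisFun ℤ (Fin d)).toMatrix ⇑B with hU0def
  have hU0 : U0 * B.toMatrix ⇑(Pi.basisFun ℤ (Fin d)) = 1 :=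
    Module.Basis.toMatrix_mul_toMatrix_flip _ _
  have hU0det : IsUnit U0.det :=
    IsUnit.of_mul_eq_one _ (by rw [← Matrix.det_mul, hU0, Matrix.det_one])
  have hU0apply : ∀ k j, U0 k j = B j k := by
    intro k j
    simp [hU0def, Module.Basis.toMatrix_apply]
  -- the real columns
  set w : Fin d → Fin d → ℝ := fun j i => ∑ k, X i k * ((B j k : ℤ) : ℝ) with hw
  have hw0 : ∀ i, 0 < w i0 i := by
    intro i
    have h2 := hp i
    simp only [Matrix.mulVec, dotProduct] at h2
    simpa [hw, hi0, hB] using h2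
  -- choose the shear coefficients
  have hN : ∀ j, ∃ Nj : ℕ, ∀ i, 0 < w j i + (Nj : ℝ) * w i0 i := by
    intro j
    obtain ⟨Nj, hNj⟩ := exists_nat_gt (Finset.univ.sup' Finset.univ_nonempty
      (fun i => (-(w j i)) / (w i0 i)))
    refine ⟨Nj, fun i => ?_⟩
    have h1 : (-(w j i)) / (w i0 i) < (Nj : ℝ) :=
      lt_of_le_of_lt (Finset.le_sup' (f := fun i => (-(w j i)) / (w i0 i))
        (Finset.mem_univ i)) hNj
    have h2 := (div_lt_iff₀ (hw0 i)).mp h1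
    linarith
  choose N' hN' using hN
  set N : Fin d → ℤ := fun j => if j = i0 then 0 else (N' j : ℤ) with hNdef
  set E : Matrix (Fin d) (Fin d) ℤ :=
    1 + Matrix.of (fun i j => if i = i0 then N j else 0) with hE
  have hEBT : E.BlockTriangular id := by
    intro i j hij
    have h1 : i ≠ j := ne_of_gt hij
    have h2 : i ≠ i0 := by
      intro h
      rw [h] at hij
      exact absurd hij (by simp [hi0, Fin.lt_def])
    simp [hE, Matrix.one_apply, h1, h2]
  have hEdet : E.det = 1 := by
    rw [Matrix.det_of_upperTriangular hEBT]
    refine Finset.prod_eq_one fun i _ => ?_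
    by_cases h : i = i0 <;> simp [hE, Matrix.one_apply, h, hNdef]
  have hUE : ∀ k j, (U0 * E) k j = U0 k j + U0 k i0 * N j := by
    intro k j
    simp only [hE, Matrix.mul_apply, Matrix.add_apply, Matrix.one_apply, Matrix.of_apply,
      mul_add, Finset.sum_add_distrib, mul_ite, mul_one, mul_zero]
    rw [Finset.sum_ite_eq' Finset.univ j (fun l => U0 k l),
      Finset.sum_ite_eq' Finset.univ i0 (fun l => U0 k l * N j)]
    simp
  refine ⟨U0 * E, ?_, ?_⟩
  · rw [Matrix.det_mul, hEdet, mul_one]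
    exact hU0det
  · intro i j
    have hcol : ∀ k, ((U0 * E).map (Int.cast : ℤ → ℝ)) k j
        = ((B j k : ℤ) : ℝ) + ((N j : ℤ) : ℝ) * ((B i0 k : ℤ) : ℝ) := by
      intro k
      rw [Matrix.map_apply, hUE k j, hU0apply, hU0apply]
      push_cast
      ring
    have hentry : (X * (U0 * E).map (Int.cast : ℤ → ℝ)) i j
        = w j i + ((N j : ℤ) : ℝ) * w i0 i := by
      rw [Matrix.mul_apply]
      simp only [hcol, hw]
      rw [Finset.mul_sum, ← Finset.sum_add_distrib]
      exact Finset.sum_congr rfl fun k _ => by ring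
    rw [hentry]
    by_cases h : j = i0
    · subst h
      simp only [hNdef, if_pos rfl]
      simpa using hw0 i
    · have := hN' j i
      simp only [hNdef, if_neg h]
      push_cast
      linarith
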